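/- Let x ∈ ℝ and z ∈ ℂ with Δ := x(1−x) − |z|² > 0, let (ẋ, ż) ∈ ℝ × ℂ, and let L be the closed-form SLD matrix built from (x, z, ẋ, ż) (with entries x_L, y_L, a, b as in the closed-form solution). Setting C := 2√Δ and Ċ := ((1−2x)ẋ − 2·Re(conj(z)·ż))/√Δ, the trace of the SLD satisfies Tr L = x_L + y_L = ((1−2x)ẋ − 2·Re(conj(z)·ż))/Δ = 2Ċ/C. -/

import Mathlib

open Complex

/-- The closed-form SLD matrix associated with the reduced state data `(x, z)`
and tangent data `(xd, zd)`. -/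
noncomputable def sldMat (x : ℝ) (z : ℂ) (xd : ℝ) (zd : ℂ) : Matrix (Fin 2) (Fin 2) ℂ :=
  let Δ : ℝ := x * (1 - x) - ‖z‖ ^ 2
  let α : ℝ := ‖z‖ ^ 2
  let β : ℝ := 2 * (zd * (starRingEnd ℂ) z).re
  let xL : ℝ := (β * (x - 1) - xd * (2 * α + x - 1)) / Δ
  let yL : ℝ := ((2 * α - x) * xd - β * x) / Δ
  let S : ℝ := xL + yL
  let a : ℝ := 2 * zd.re - z.re * S
  let b : ℝ := 2 * zd.im - z.im * S
  !![(xL : ℂ), (a : ℂ) + (b : ℂ) * Complex.I;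
     (a : ℂ) - (b : ℂ) * Complex.I, (yL : ℂ)]

/-- Trace of the closed-form SLD:
`Tr L = x_L + y_L = ((1−2x)ẋ − 2 Re(conj z · ż))/Δ = 2Ċ/C`. -/
theorem sld_trace (x : ℝ) (z : ℂ) (xd : ℝ) (zd : ℂ)
    (hΔ : x * (1 - x) - ‖z‖ ^ 2 > 0) :
    let Δ : ℝ := x * (1 - x) - ‖z‖ ^ 2
    let α : ℝ := ‖z‖ ^ 2
    let β : ℝ := 2 * (zd * (starRingEnd ℂ) z).re
    let xL : ℝ := (β * (x - 1) - xd * (2 * α + x - 1)) / Δ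
    let yL : ℝ := ((2 * α - x) * xd - β * x) / Δ
    let C : ℝ := 2 * Real.sqrt Δ
    let Cd : ℝ := ((1 - 2 * x) * xd - 2 * ((starRingEnd ℂ) z * zd).re) / Real.sqrt Δ
    Matrix.trace (sldMat x z xd zd) = ((xL + yL : ℝ) : ℂ) ∧
    xL + yL = ((1 - 2 * x) * xd - 2 * ((starRingEnd ℂ) z * zd).re) / Δ ∧
    ((1 - 2 * x) * xd - 2 * ((starRingEnd ℂ) z * zd).re) / Δ = 2 * Cd / C := by
  intro Δ α β xL yL C Cd
  have hΔ' : Δ ≠ 0 := ne_of_gt hΔ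
  have hs : Real.sqrt Δ > 0 := Real.sqrt_pos.mpr hΔ
  have hsq : Real.sqrt Δ * Real.sqrt Δ = Δ := Real.mul_self_sqrt hΔ.le
  have hre : ((starRingEnd ℂ) z * zd).re = (zd * (starRingEnd ℂ) z).re := by
    ring_nf
  refine ⟨?_, ?_, ?_⟩
  · show Matrix.trace (sldMat x z xd zd) = _
    unfold xL yL β α Δ
    simp [sldMat, Matrix.trace, Matrix.diag, Fin.sum_univ_two]
  · show xL + yL = _
    rw [hre]
    show (β * (x - 1) - xd * (2 * α + x - 1)) / Δ + ((2 * α - x) * xd - β * x) / Δ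
        = ((1 - 2 * x) * xd - β) / Δ
    field_simp
    ring
  · show _ = 2 * (((1 - 2 * x) * xd - 2 * ((starRingEnd ℂ) z * zd).re) / Real.sqrt Δ) / (2 * Real.sqrt Δ)
    set s := Real.sqrt Δ with hsdef
    rw [← hsq]
    field_simp
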